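/- There exist constants c, C > 0 such that for all sufficiently large n and all k with C·log₂ n ≤ k ≤ n/2, with probability at least 0.99 over H drawn from B(k, n−k, 1/2), every biclique (L, R) of H with |R| ≥ 1 and |L| + |R| = k satisfies |L| ≤ c·log₂ n. -/

import Mathlib

open MeasureTheory

/-- The random bipartite graph model `B(k, m, p)`: left vertex set `Fin k`, right vertex
set `Fin m`, each of the `k·m` edges present independently with probability `p`
(`true` means present). -/
noncomputable def bipartiteER (k m : ℕ) (p : ENNReal) (hp : p ≤ 1) :
    Measure (Fin k × Fin m → Bool) :=
  Measure.pi fun _ : Fin k × Fin m => (PMF.bernoulli p.toNNReal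
    (by simpa using ENNReal.toNNReal_mono ENNReal.one_ne_top hp)).toMeasure

/-- `(L, R)` is a biclique of the bipartite graph `H`. -/
def IsBiclique {k m : ℕ} (H : Fin k × Fin m → Bool) (L : Finset (Fin k))
    (R : Finset (Fin m)) : Prop :=
  ∀ u ∈ L, ∀ v ∈ R, H (u, v) = true

lemma biclique_set_eq {k m : ℕ} (L : Finset (Fin k)) (R : Finset (Fin m)) :
    {H : Fin k × Fin m → Bool | IsBiclique H L R}
      = Set.pi Set.univ (fun i => if i ∈ L ×ˢ R then ({true} : Set Bool) else Set.univ) := by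
  ext H
  simp only [Set.mem_setOf_eq, Set.mem_pi, Set.mem_univ, forall_true_left]
  constructor
  · intro h i
    by_cases hi : i ∈ L ×ˢ R
    · obtain ⟨h1, h2⟩ := Finset.mem_product.mp hi
      simp [hi, h i.1 h1 i.2 h2]
    · simp [hi]
  · intro h u hu v hv
    have := h (u, v)
    rwa [if_pos (Finset.mem_product.mpr ⟨hu, hv⟩), Set.mem_singleton_iff] at this

lemma measurableSet_biclique {k m : ℕ} (L : Finset (Fin k)) (R : Finset (Fin m)) :
    MeasurableSet {H : Fin k × Fin m → Bool | IsBiclique H L R} := by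
  rw [biclique_set_eq]
  exact MeasurableSet.univ_pi fun i => by split <;> simp

lemma biclique_prob {k m : ℕ} (L : Finset (Fin k)) (R : Finset (Fin m))
    (hp : (1/2 : ENNReal) ≤ 1) :
    bipartiteER k m (1/2) hp {H | IsBiclique H L R}
      = (1/2 : ENNReal) ^ (L.card * R.card) := by
  classical
  rw [biclique_set_eq, bipartiteER, Measure.pi_pi]
  have hμ : ∀ i : Fin k × Fin m,
      (PMF.bernoulli (1/2 : ENNReal).toNNReal
        (by simpa using ENNReal.toNNReal_mono ENNReal.one_ne_top hp)).toMeasure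
        (if i ∈ L ×ˢ R then ({true} : Set Bool) else Set.univ)
      = if i ∈ L ×ˢ R then (1/2 : ENNReal) else 1 := by
    intro i
    split
    · rw [PMF.toMeasure_apply_singleton _ _ (measurableSet_singleton _)]
      simp [PMF.bernoulli_apply, ENNReal.toNNReal_ofNat]
    · simp [PMF.bernoulli_apply, ENNReal.toNNReal_ofNat,
        add_tsub_cancel_of_le (show (2:ENNReal)⁻¹ ≤ 1 by simp [ENNReal.inv_le_one]),
        ENNReal.inv_two_add_inv_two]
  simp_rw [hμ]
  rw [Finset.prod_ite_mem, Finset.univ_inter, Finset.prod_const, Finset.card_product]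

lemma pow_bound {n ℓ : ℕ} (hn : 1 ≤ n) (h : 4 * Real.logb 2 n < ℓ) : n ^ 4 ≤ 2 ^ ℓ := by
  have hn' : (0:ℝ) < n := by exact_mod_cast hn
  have h1 : ((n:ℝ)) ^ (4:ℕ) ≤ (2:ℝ) ^ (ℓ:ℕ) := by
    have hb : (n:ℝ) = (2:ℝ) ^ (Real.logb 2 n) :=
      (Real.rpow_logb (by norm_num) (by norm_num) hn').symm
    calc (n:ℝ) ^ (4:ℕ) = ((2:ℝ) ^ (Real.logb 2 n)) ^ (4:ℕ) := by rw [← hb]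
      _ = (2:ℝ) ^ (4 * Real.logb 2 n) := by
          rw [← Real.rpow_natCast ((2:ℝ) ^ (Real.logb 2 n)) 4,
            ← Real.rpow_mul (by norm_num), mul_comm]
          norm_num
      _ ≤ (2:ℝ) ^ ((ℓ:ℕ):ℝ) := Real.rpow_le_rpow_of_exponent_le (by norm_num) h.le
      _ = (2:ℝ) ^ (ℓ:ℕ) := Real.rpow_natCast 2 ℓ
  exact_mod_cast h1

theorem stmt_2 : ∃ c C : ℝ, 0 < c ∧ 0 < C ∧ ∃ n₀ : ℕ, ∀ n ≥ n₀, ∀ k : ℕ,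
    C * Real.logb 2 n ≤ k → (k : ℝ) ≤ n / 2 →
    ENNReal.ofReal 0.99 ≤
      bipartiteER k (n - k) (1/2) (by norm_num)
        {H | ∀ (L : Finset (Fin k)) (R : Finset (Fin (n - k))),
          IsBiclique H L R → 1 ≤ R.card → L.card + R.card = k →
          (L.card : ℝ) ≤ c * Real.logb 2 n} := by
  classical
  refine ⟨4, 1, by norm_num, by norm_num, 100, ?_⟩
  intro n hn k _ hk2
  have hn0 : (0:ℝ) < n := by exact_mod_cast (by omega : 0 < n)
  have hkn : k < n := by
    have : (k:ℝ) < n := lt_of_le_of_lt hk2 (by linarith)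
    exact_mod_cast this
  set m := n - k with hm
  set μ := bipartiteER k m (1/2) (by norm_num) with hμdef
  haveI : IsProbabilityMeasure μ := by
    rw [hμdef, bipartiteER]; infer_instance
  set S : Finset (Finset (Fin k) × Finset (Fin m)) :=
    Finset.univ.filter (fun p => 1 ≤ p.2.card ∧ p.1.card + p.2.card = k ∧
      ¬((p.1.card:ℝ) ≤ 4 * Real.logb 2 n)) with hS
  set U : Set (Fin k × Fin m → Bool) := ⋃ p ∈ S, {H | IsBiclique H p.1 p.2} with hU
  have hUmeas : MeasurableSet U :=
    Finset.measurableSet_biUnion _ (fun p _ => measurableSet_biclique p.1 p.2)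
  have hsub : Uᶜ ⊆ {H | ∀ (L : Finset (Fin k)) (R : Finset (Fin m)),
      IsBiclique H L R → 1 ≤ R.card → L.card + R.card = k →
      (L.card : ℝ) ≤ 4 * Real.logb 2 n} := by
    intro H hH L R hB hR hcard
    by_contra hc
    exact hH (Set.mem_iUnion₂.mpr
      ⟨(L, R), Finset.mem_filter.mpr ⟨Finset.mem_univ _, hR, hcard, hc⟩, hB⟩)
  -- the ENNReal facts about n
  have hnn0 : (n:ENNReal) ≠ 0 := by exact_mod_cast (show n ≠ 0 by omega)
  have hnnt : (n:ENNReal) ≠ ⊤ := ENNReal.natCast_ne_top n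
  -- bound the sum
  have hsum : ∑ p ∈ S, (1/2 : ENNReal) ^ (p.1.card * p.2.card) ≤ (n : ENNReal)⁻¹ := by
    have hfib : ∀ p ∈ S, p.2.card ∈ Finset.range (k+1) := by
      intro p hp
      simp only [hS, Finset.mem_filter] at hp
      exact Finset.mem_range.mpr (by omega)
    rw [← Finset.sum_fiberwise_of_maps_to hfib]
    have hfiber : ∀ r ∈ Finset.range (k+1),
        ∑ p ∈ S.filter (fun p => p.2.card = r), (1/2:ENNReal) ^ (p.1.card * p.2.card)
          ≤ ((n:ENNReal) ^ 2)⁻¹ := by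
      intro r _
      rcases (S.filter (fun p => p.2.card = r)).eq_empty_or_nonempty with he | ⟨q, hq⟩
      · simp [he]
      have hq' := hq
      simp only [Finset.mem_filter, hS, Finset.mem_univ, true_and] at hq'
      obtain ⟨⟨hr1, hkq, hlog⟩, hqr⟩ := hq'
      have hrk : r ≤ k := by omega
      have hr1' : 1 ≤ r := by omega
      have hql : q.1.card = k - r := by omega
      -- every term in the fiber is the same
      have hconst : ∀ p ∈ S.filter (fun p => p.2.card = r),
          (1/2:ENNReal) ^ (p.1.card * p.2.card) = (1/2:ENNReal) ^ ((k-r)*r) := by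
        intro p hp
        simp only [Finset.mem_filter, hS, Finset.mem_univ, true_and] at hp
        obtain ⟨⟨h1, h2, h3⟩, h4⟩ := hp
        have : p.1.card = k - r := by omega
        rw [this, h4]
      -- the fiber is not too large
      have hcard : (S.filter (fun p => p.2.card = r)).card ≤ n ^ (2*r) := by
        have hsub2 : S.filter (fun p => p.2.card = r) ⊆
            (Finset.powersetCard (k-r) Finset.univ) ×ˢ (Finset.powersetCard r Finset.univ) := by
          intro p hp
          simp only [Finset.mem_filter, hS, Finset.mem_univ, true_and] at hp
          obtain ⟨⟨h1, h2, h3⟩, h4⟩ := hp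
          rw [Finset.mem_product, Finset.mem_powersetCard, Finset.mem_powersetCard]
          exact ⟨⟨Finset.subset_univ _, by omega⟩, ⟨Finset.subset_univ _, h4⟩⟩
        calc (S.filter (fun p => p.2.card = r)).card
            ≤ _ := Finset.card_le_card hsub2
          _ = k.choose (k-r) * m.choose r := by
              rw [Finset.card_product, Finset.card_powersetCard, Finset.card_powersetCard,
                Finset.card_univ, Finset.card_univ, Fintype.card_fin, Fintype.card_fin]
          _ = k.choose r * m.choose r := by rw [Nat.choose_symm hrk]
          _ ≤ k ^ r * m ^ r := Nat.mul_le_mul (Nat.choose_le_pow k r) (Nat.choose_le_pow m r)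
          _ ≤ n ^ r * n ^ r :=
              Nat.mul_le_mul (Nat.pow_le_pow_left (by omega) r)
                (Nat.pow_le_pow_left (by omega) r)
          _ = n ^ (2*r) := by rw [← pow_add]; ring_nf
      -- probability of a single bad biclique
      have hprob : (1/2:ENNReal) ^ ((k-r)*r) ≤ ((n:ENNReal) ^ (4*r))⁻¹ := by
        have hnat : n ^ 4 ≤ 2 ^ (k - r) := by
          apply pow_bound (by omega)
          rw [hql] at hlog
          linarith [not_le.mp hlog]
        have hnat2 : n ^ (4*r) ≤ 2 ^ ((k-r)*r) := by
          calc n ^ (4*r) = (n ^ 4) ^ r := by rw [← pow_mul]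
            _ ≤ (2 ^ (k-r)) ^ r := Nat.pow_le_pow_left hnat r
            _ = 2 ^ ((k-r)*r) := by rw [← pow_mul]
        have heq : (1/2:ENNReal) ^ ((k-r)*r) = ((2:ENNReal) ^ ((k-r)*r))⁻¹ := by
          rw [one_div, ENNReal.inv_pow]
        rw [heq]
        apply ENNReal.inv_le_inv'
        calc (n:ENNReal) ^ (4*r) = ((n ^ (4*r) : ℕ) : ENNReal) := by push_cast; ring
          _ ≤ ((2 ^ ((k-r)*r) : ℕ) : ENNReal) := by exact_mod_cast hnat2
          _ = (2:ENNReal) ^ ((k-r)*r) := by push_cast; ring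
      calc ∑ p ∈ S.filter (fun p => p.2.card = r), (1/2:ENNReal) ^ (p.1.card * p.2.card)
          = ∑ _p ∈ S.filter (fun p => p.2.card = r), (1/2:ENNReal) ^ ((k-r)*r) :=
            Finset.sum_congr rfl hconst
        _ = ((S.filter (fun p => p.2.card = r)).card : ENNReal) * (1/2:ENNReal) ^ ((k-r)*r) := by
            rw [Finset.sum_const, nsmul_eq_mul]
        _ ≤ ((n:ENNReal) ^ (2*r)) * ((n:ENNReal) ^ (4*r))⁻¹ := by
            apply mul_le_mul'
            · calc ((S.filter (fun p => p.2.card = r)).card : ENNReal)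
                  ≤ ((n ^ (2*r) : ℕ) : ENNReal) := by exact_mod_cast hcard
                _ = (n:ENNReal) ^ (2*r) := by push_cast; ring
            · exact hprob
        _ ≤ ((n:ENNReal) ^ 2)⁻¹ := by
            have h4 : 4 * r = 2 * r + (2 * (r - 1) + 2) := by omega
            rw [h4, pow_add,
              ENNReal.mul_inv (Or.inl (pow_ne_zero _ hnn0)) (Or.inl (ENNReal.pow_ne_top hnnt)),
              ← mul_assoc,
              ENNReal.mul_inv_cancel (pow_ne_zero _ hnn0) (ENNReal.pow_ne_top hnnt), one_mul]
            apply ENNReal.inv_le_inv'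
            exact pow_le_pow_right₀ (by exact_mod_cast (show 1 ≤ n by omega)) (by omega)
    calc ∑ r ∈ Finset.range (k+1),
          ∑ p ∈ S.filter (fun p => p.2.card = r), (1/2:ENNReal) ^ (p.1.card * p.2.card)
        ≤ ∑ _r ∈ Finset.range (k+1), ((n:ENNReal) ^ 2)⁻¹ := Finset.sum_le_sum hfiber
      _ = ((k+1 : ℕ) : ENNReal) * ((n:ENNReal) ^ 2)⁻¹ := by
          rw [Finset.sum_const, Finset.card_range, nsmul_eq_mul]
      _ ≤ (n:ENNReal) * ((n:ENNReal) ^ 2)⁻¹ := by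
          apply mul_le_mul'
          · exact_mod_cast (show k + 1 ≤ n by omega)
          · exact le_rfl
      _ = (n:ENNReal)⁻¹ := by
          rw [pow_two, ENNReal.mul_inv (Or.inl hnn0) (Or.inl hnnt), ← mul_assoc,
            ENNReal.mul_inv_cancel hnn0 hnnt, one_mul]
  -- union bound
  have hμU : μ U ≤ (n:ENNReal)⁻¹ := by
    calc μ U ≤ ∑ p ∈ S, μ {H | IsBiclique H p.1 p.2} := measure_biUnion_finset_le _ _
      _ = ∑ p ∈ S, (1/2 : ENNReal) ^ (p.1.card * p.2.card) :=
          Finset.sum_congr rfl (fun p _ => biclique_prob p.1 p.2 _)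
      _ ≤ (n : ENNReal)⁻¹ := hsum
  -- conclude
  have hend : ENNReal.ofReal 0.99 ≤ 1 - (n:ENNReal)⁻¹ := by
    have h100 : (1:ENNReal) - (100:ENNReal)⁻¹ = ENNReal.ofReal 0.99 := by
      have h01 : ((100:ENNReal))⁻¹ = ENNReal.ofReal 0.01 := by
        rw [show (0.01:ℝ) = (100:ℝ)⁻¹ by norm_num, ENNReal.ofReal_inv_of_pos (by norm_num)]
        norm_num
      rw [h01, ← ENNReal.ofReal_one, ← ENNReal.ofReal_sub _ (by norm_num)]
      norm_num
    rw [← h100]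
    apply tsub_le_tsub_left
    apply ENNReal.inv_le_inv'
    exact_mod_cast hn
  calc ENNReal.ofReal 0.99 ≤ 1 - (n:ENNReal)⁻¹ := hend
    _ ≤ 1 - μ U := tsub_le_tsub_left hμU 1
    _ = μ Uᶜ := (prob_compl_eq_one_sub hUmeas).symm
    _ ≤ μ {H | ∀ (L : Finset (Fin k)) (R : Finset (Fin m)),
          IsBiclique H L R → 1 ≤ R.card → L.card + R.card = k →
          (L.card : ℝ) ≤ 4 * Real.logb 2 n} := measure_mono hsub
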